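/- Define the second-order differential operator Δ_g acting on smooth functions F : ℝ^5 → ℝ of the coordinates (a, b, p, q, r) by Δ_g F := (1/24)(∂²F/∂a² + ∂²F/∂b² − ∂²F/∂a∂b + 3·∂F/∂a) + (1/8)·e^{2b−2a}·(p²·∂²F/∂q² + ∂²F/∂r² + 2p·∂²F/∂r∂q + e^{−2a−4b}·∂²F/∂q² + e^{−6b}·∂²F/∂p²). Then for all real constants γ_1, …, γ_8, the function F(a,b,p,q,r) = (γ_1 + γ_2·p + γ_3·r + (γ_4 + γ_5·p)·(a+2b))·e^{−a−b} + (γ_6 + γ_7·q + γ_8·r)·e^{−2a} satisfies Δ_g F = −F/12. -/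

import Mathlib

lemma hd1 (p q c K x : ℝ) :
    HasDerivAt (fun t : ℝ => (p + q * t) * Real.exp (-t - c) + K * Real.exp (-2 * t))
      ((q - (p + q * x)) * Real.exp (-x - c) - 2 * K * Real.exp (-2 * x)) x := by
  have h1 : HasDerivAt (fun t : ℝ => p + q * t) q x := by
    simpa using ((hasDerivAt_id x).const_mul q).const_add p
  have h2 : HasDerivAt (fun t : ℝ => Real.exp (-t - c)) (Real.exp (-x - c) * (-1)) x := by
    have h : HasDerivAt (fun t : ℝ => -t - c) (-1) x := by
      simpa using ((hasDerivAt_id x).neg.sub_const c)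
    exact h.exp
  have h3 : HasDerivAt (fun t : ℝ => Real.exp (-2 * t)) (Real.exp (-2 * x) * (-2)) x := by
    have h : HasDerivAt (fun t : ℝ => -2 * t) (-2) x := by
      simpa using (hasDerivAt_id x).const_mul (-2 : ℝ)
    exact h.exp
  have := (h1.mul h2).add (h3.const_mul K)
  refine this.congr_deriv ?_
  ring

lemma hd2 (p q c K x : ℝ) :
    HasDerivAt (fun t : ℝ => (p + q * t) * Real.exp (-c - t) + K)
      ((q - (p + q * x)) * Real.exp (-c - x)) x := by
  have h1 : HasDerivAt (fun t : ℝ => p + q * t) q x := by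
    simpa using ((hasDerivAt_id x).const_mul q).const_add p
  have h2 : HasDerivAt (fun t : ℝ => Real.exp (-c - t)) (Real.exp (-c - x) * (-1)) x := by
    have h : HasDerivAt (fun t : ℝ => -c - t) (-1) x := by
      exact (hasDerivAt_id x).const_sub (-c)
    exact h.exp
  have := (h1.mul h2).add_const K
  refine this.congr_deriv ?_
  ring

lemma hd4 (p q p2 q2 E1 E2 x : ℝ) :
    HasDerivAt (fun t : ℝ => (p + q * t) * E1 + (p2 + q2 * t) * E2)
      (q * E1 + q2 * E2) x := by
  have h1 : HasDerivAt (fun t : ℝ => p + q * t) q x := by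
    simpa using ((hasDerivAt_id x).const_mul q).const_add p
  have h2 : HasDerivAt (fun t : ℝ => p2 + q2 * t) q2 x := by
    simpa using ((hasDerivAt_id x).const_mul q2).const_add p2
  exact (h1.mul_const E1).add (h2.mul_const E2)


/-- Partial derivative of a function on `ℝ⁵` along the `i`-th coordinate direction. -/
noncomputable def pd5 (i : Fin 5) (F : (Fin 5 → ℝ) → ℝ) : (Fin 5 → ℝ) → ℝ :=
  fun v => deriv (fun t : ℝ => F (Function.update v i t)) (v i)

/-- The Laplace–Beltrami operator of the `SL(3,ℝ)`-invariant Einstein metric on the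
space of conics, in the coordinates `(a, b, p, q, r) = (v 0, v 1, v 2, v 3, v 4)`:
`Δ_g F = (1/24)(F_aa + F_bb − F_ab + 3F_a)
  + (1/8)·e^{2b−2a}·(p²F_qq + F_rr + 2pF_rq + e^{−2a−4b}F_qq + e^{−6b}F_pp)`. -/
noncomputable def laplaceG (F : (Fin 5 → ℝ) → ℝ) : (Fin 5 → ℝ) → ℝ := fun v =>
  (1 / 24) * (pd5 0 (pd5 0 F) v + pd5 1 (pd5 1 F) v - pd5 0 (pd5 1 F) v + 3 * pd5 0 F v)
    + (1 / 8) * Real.exp (2 * v 1 - 2 * v 0) *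
        ((v 2) ^ 2 * pd5 3 (pd5 3 F) v + pd5 4 (pd5 4 F) v + 2 * v 2 * pd5 4 (pd5 3 F) v
          + Real.exp (-2 * v 0 - 4 * v 1) * pd5 3 (pd5 3 F) v
          + Real.exp (-6 * v 1) * pd5 2 (pd5 2 F) v)

/-- For all constants `γ₁, …, γ₈`, the function
`F = (γ₁ + γ₂p + γ₃r + (γ₄ + γ₅p)(a+2b))e^{−a−b} + (γ₆ + γ₇q + γ₈r)e^{−2a}`
satisfies `Δ_g F = −F/12`. -/
theorem explicit_eigenfunctions (γ₁ γ₂ γ₃ γ₄ γ₅ γ₆ γ₇ γ₈ : ℝ)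
    (F : (Fin 5 → ℝ) → ℝ)
    (hF : ∀ v : Fin 5 → ℝ,
      F v = (γ₁ + γ₂ * v 2 + γ₃ * v 4 + (γ₄ + γ₅ * v 2) * (v 0 + 2 * v 1)) *
              Real.exp (-(v 0) - v 1)
            + (γ₆ + γ₇ * v 3 + γ₈ * v 4) * Real.exp (-2 * v 0)) :
    ∀ v : Fin 5 → ℝ, laplaceG F v = -F v / 12 := by
  have h0 : pd5 0 F = fun w =>
      (γ₄ + γ₅ * w 2 - (γ₁ + γ₂ * w 2 + γ₃ * w 4 + (γ₄ + γ₅ * w 2) * (w 0 + 2 * w 1))) *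
        Real.exp (-(w 0) - w 1) - 2 * (γ₆ + γ₇ * w 3 + γ₈ * w 4) * Real.exp (-2 * w 0) := by
    funext w
    show deriv (fun t : ℝ => F (Function.update w 0 t)) (w 0) = _
    have e : (fun t : ℝ => F (Function.update w 0 t))
        = fun t : ℝ => (γ₁ + γ₂ * w 2 + γ₃ * w 4 + (γ₄ + γ₅ * w 2) * (2 * w 1)
            + (γ₄ + γ₅ * w 2) * t) * Real.exp (-t - w 1)
            + (γ₆ + γ₇ * w 3 + γ₈ * w 4) * Real.exp (-2 * t) := by
      funext t; rw [hF]; simp [Function.update]; try ring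
    rw [e, (hd1 _ _ _ _ _).deriv]; try ring
  have h1 : pd5 1 F = fun w =>
      (2 * (γ₄ + γ₅ * w 2) - (γ₁ + γ₂ * w 2 + γ₃ * w 4 + (γ₄ + γ₅ * w 2) * (w 0 + 2 * w 1))) *
        Real.exp (-(w 0) - w 1) := by
    funext w
    show deriv (fun t : ℝ => F (Function.update w 1 t)) (w 1) = _
    have e : (fun t : ℝ => F (Function.update w 1 t))
        = fun t : ℝ => (γ₁ + γ₂ * w 2 + γ₃ * w 4 + (γ₄ + γ₅ * w 2) * w 0
            + ((γ₄ + γ₅ * w 2) * 2) * t) * Real.exp (-(w 0) - t)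
            + (γ₆ + γ₇ * w 3 + γ₈ * w 4) * Real.exp (-2 * w 0) := by
      funext t; rw [hF]; simp [Function.update]; try ring
    rw [e, (hd2 _ _ _ _ _).deriv]; try ring
  have h2 : pd5 2 F = fun w =>
      (γ₂ + γ₅ * (w 0 + 2 * w 1)) * Real.exp (-(w 0) - w 1) := by
    funext w
    show deriv (fun t : ℝ => F (Function.update w 2 t)) (w 2) = _
    have e : (fun t : ℝ => F (Function.update w 2 t))
        = fun t : ℝ => (γ₁ + γ₃ * w 4 + γ₄ * (w 0 + 2 * w 1)
            + (γ₂ + γ₅ * (w 0 + 2 * w 1)) * t) * Real.exp (-(w 0) - w 1)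
            + (γ₆ + γ₇ * w 3 + γ₈ * w 4 + 0 * t) * Real.exp (-2 * w 0) := by
      funext t; rw [hF]; simp [Function.update]; try ring
    rw [e, (hd4 _ _ _ _ _ _ _).deriv]; try ring
  have h3 : pd5 3 F = fun w => γ₇ * Real.exp (-2 * w 0) := by
    funext w
    show deriv (fun t : ℝ => F (Function.update w 3 t)) (w 3) = _
    have e : (fun t : ℝ => F (Function.update w 3 t))
        = fun t : ℝ => (γ₁ + γ₂ * w 2 + γ₃ * w 4 + (γ₄ + γ₅ * w 2) * (w 0 + 2 * w 1)
            + 0 * t) * Real.exp (-(w 0) - w 1)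
            + (γ₆ + γ₈ * w 4 + γ₇ * t) * Real.exp (-2 * w 0) := by
      funext t; rw [hF]; simp [Function.update]; try ring
    rw [e, (hd4 _ _ _ _ _ _ _).deriv]; try ring
  have h4 : pd5 4 F = fun w =>
      γ₃ * Real.exp (-(w 0) - w 1) + γ₈ * Real.exp (-2 * w 0) := by
    funext w
    show deriv (fun t : ℝ => F (Function.update w 4 t)) (w 4) = _
    have e : (fun t : ℝ => F (Function.update w 4 t))
        = fun t : ℝ => (γ₁ + γ₂ * w 2 + (γ₄ + γ₅ * w 2) * (w 0 + 2 * w 1)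
            + γ₃ * t) * Real.exp (-(w 0) - w 1)
            + (γ₆ + γ₇ * w 3 + γ₈ * t) * Real.exp (-2 * w 0) := by
      funext t; rw [hF]; simp [Function.update]; try ring
    rw [e, (hd4 _ _ _ _ _ _ _).deriv]; try ring
  intro v
  have h00 : pd5 0 (pd5 0 F) v =
      (γ₁ + γ₂ * v 2 + γ₃ * v 4 + (γ₄ + γ₅ * v 2) * (v 0 + 2 * v 1)
        - 2 * (γ₄ + γ₅ * v 2)) * Real.exp (-(v 0) - v 1)
      + 4 * (γ₆ + γ₇ * v 3 + γ₈ * v 4) * Real.exp (-2 * v 0) := by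
    show deriv (fun t : ℝ => pd5 0 F (Function.update v 0 t)) (v 0) = _
    have e : (fun t : ℝ => pd5 0 F (Function.update v 0 t))
        = fun t : ℝ => (γ₄ + γ₅ * v 2 - (γ₁ + γ₂ * v 2 + γ₃ * v 4)
            - (γ₄ + γ₅ * v 2) * (2 * v 1) + (-(γ₄ + γ₅ * v 2)) * t) * Real.exp (-t - v 1)
            + (-2 * (γ₆ + γ₇ * v 3 + γ₈ * v 4)) * Real.exp (-2 * t) := by
      funext t; rw [h0]; simp [Function.update]; try ring
    rw [e, (hd1 _ _ _ _ _).deriv]; try ring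
  have h11 : pd5 1 (pd5 1 F) v =
      (γ₁ + γ₂ * v 2 + γ₃ * v 4 + (γ₄ + γ₅ * v 2) * (v 0 + 2 * v 1)
        - 4 * (γ₄ + γ₅ * v 2)) * Real.exp (-(v 0) - v 1) := by
    show deriv (fun t : ℝ => pd5 1 F (Function.update v 1 t)) (v 1) = _
    have e : (fun t : ℝ => pd5 1 F (Function.update v 1 t))
        = fun t : ℝ => (2 * (γ₄ + γ₅ * v 2) - (γ₁ + γ₂ * v 2 + γ₃ * v 4)
            - (γ₄ + γ₅ * v 2) * v 0 + (-((γ₄ + γ₅ * v 2) * 2)) * t) * Real.exp (-(v 0) - t)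
            + 0 := by
      funext t; rw [h1]; simp [Function.update]; try ring
    rw [e, (hd2 _ _ _ _ _).deriv]; try ring
  have h01 : pd5 0 (pd5 1 F) v =
      (γ₁ + γ₂ * v 2 + γ₃ * v 4 + (γ₄ + γ₅ * v 2) * (v 0 + 2 * v 1)
        - 3 * (γ₄ + γ₅ * v 2)) * Real.exp (-(v 0) - v 1) := by
    show deriv (fun t : ℝ => pd5 1 F (Function.update v 0 t)) (v 0) = _
    have e : (fun t : ℝ => pd5 1 F (Function.update v 0 t))
        = fun t : ℝ => (2 * (γ₄ + γ₅ * v 2) - (γ₁ + γ₂ * v 2 + γ₃ * v 4)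
            - (γ₄ + γ₅ * v 2) * (2 * v 1) + (-(γ₄ + γ₅ * v 2)) * t) * Real.exp (-t - v 1)
            + 0 * Real.exp (-2 * t) := by
      funext t; rw [h1]; simp [Function.update]; try ring
    rw [e, (hd1 _ _ _ _ _).deriv]; try ring
  have h22 : pd5 2 (pd5 2 F) v = 0 := by
    show deriv (fun t : ℝ => pd5 2 F (Function.update v 2 t)) (v 2) = 0
    have e : (fun t : ℝ => pd5 2 F (Function.update v 2 t))
        = fun _ : ℝ => (γ₂ + γ₅ * (v 0 + 2 * v 1)) * Real.exp (-(v 0) - v 1) := by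
      funext t; rw [h2]; simp [Function.update]
    rw [e, deriv_const]
  have h33 : pd5 3 (pd5 3 F) v = 0 := by
    show deriv (fun t : ℝ => pd5 3 F (Function.update v 3 t)) (v 3) = 0
    have e : (fun t : ℝ => pd5 3 F (Function.update v 3 t))
        = fun _ : ℝ => γ₇ * Real.exp (-2 * v 0) := by
      funext t; rw [h3]; simp [Function.update]
    rw [e, deriv_const]
  have h43 : pd5 4 (pd5 3 F) v = 0 := by
    show deriv (fun t : ℝ => pd5 3 F (Function.update v 4 t)) (v 4) = 0
    have e : (fun t : ℝ => pd5 3 F (Function.update v 4 t))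
        = fun _ : ℝ => γ₇ * Real.exp (-2 * v 0) := by
      funext t; rw [h3]; simp [Function.update]
    rw [e, deriv_const]
  have h44 : pd5 4 (pd5 4 F) v = 0 := by
    show deriv (fun t : ℝ => pd5 4 F (Function.update v 4 t)) (v 4) = 0
    have e : (fun t : ℝ => pd5 4 F (Function.update v 4 t))
        = fun _ : ℝ => γ₃ * Real.exp (-(v 0) - v 1) + γ₈ * Real.exp (-2 * v 0) := by
      funext t; rw [h4]; simp [Function.update]
    rw [e, deriv_const]
  rw [laplaceG, h00, h11, h01, h22, h33, h43, h44, h0, hF]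
  ring
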